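/- Let q ∈ ℂ with 0 < |q| < 1. Then Σ_{n≥0} Σ_{j=0}^{n} (-1)^j q^{2n²+2n+j²+j} / ((-q;q)_{2n+1} · (q²;q²)_{n-j} · (q²;q²)_j · (1 - q^{2j+1})) = F₂(q²), where F₂(x) = Σ_{n≥0} x^{n²+n} / (x^{n+1};x)_{n+1}. -/

import Mathlib

/-- Finite q-Pochhammer symbol `(x;q)_n = ∏_{i=0}^{n-1} (1 - x q^i)`. -/
noncomputable def qPoch (x q : ℂ) (n : ℕ) : ℂ :=
  ∏ i ∈ Finset.range n, (1 - x * q ^ i)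

/-- The second-order mock theta function `F₂(x) = Σ_{n≥0} x^{n²+n}/(x^{n+1};x)_{n+1}`. -/
noncomputable def mockF2 (x : ℂ) : ℂ :=
  ∑' n : ℕ, x ^ (n ^ 2 + n) / qPoch (x ^ (n + 1)) x (n + 1)

open Finset

lemma qPoch_zero (x q : ℂ) : qPoch x q 0 = 1 := Finset.prod_range_zero _

lemma qPoch_succ (x q : ℂ) (n : ℕ) : qPoch x q (n+1) = qPoch x q n * (1 - x * q ^ n) :=
  Finset.prod_range_succ _ _

lemma qPoch_ne_zero {x q : ℂ} (hx : ‖x‖ < 1) (hq : ‖q‖ ≤ 1) (n : ℕ) :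
    qPoch x q n ≠ 0 := by
  refine Finset.prod_ne_zero_iff.mpr fun i _ h => ?_
  have h1 : x * q ^ i = 1 := by rwa [sub_eq_zero, eq_comm] at h
  have : ‖x * q ^ i‖ < 1 := by
    rw [norm_mul, norm_pow]
    calc ‖x‖ * ‖q‖ ^ i ≤ ‖x‖ * 1 :=
          mul_le_mul_of_nonneg_left (pow_le_one₀ (norm_nonneg _) hq) (norm_nonneg _)
      _ = ‖x‖ := mul_one _
      _ < 1 := hx
  rw [h1] at this; simp at this

lemma one_sub_pow_ne_zero {q : ℂ} (h1 : ‖q‖ < 1) {m : ℕ} (hm : m ≠ 0) :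
    (1 : ℂ) - q ^ m ≠ 0 := by
  intro h
  have habs : ‖q ^ m‖ < 1 := by
    rw [norm_pow]; exact pow_lt_one₀ (norm_nonneg q) h1 hm
  rw [sub_eq_zero] at h
  rw [← h] at habs; simp at habs

lemma qPoch_pair (q : ℂ) (m : ℕ) :
    qPoch (-q) q m * qPoch q q m = qPoch (q^2) (q^2) m := by
  unfold qPoch
  rw [← Finset.prod_mul_distrib]
  exact Finset.prod_congr rfl fun i _ => by ring

lemma qPoch_split (p : ℂ) (a b : ℕ) :
    qPoch p p a * qPoch (p^(a+1)) p b = qPoch p p (a+b) := by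
  unfold qPoch
  rw [Finset.prod_range_add]
  congr 1
  refine Finset.prod_congr rfl fun i _ => ?_
  rw [← pow_add]
  have h : a + 1 + i = a + i + 1 := by omega
  rw [h, pow_succ']

noncomputable def gaussB (p : ℂ) : ℕ → ℕ → ℂ
  | _, 0 => 1
  | 0, _+1 => 0
  | n+1, j+1 => gaussB p n (j+1) + p ^ (n - j) * gaussB p n j

lemma gaussB_zero_right (p : ℂ) (n : ℕ) : gaussB p n 0 = 1 := by cases n <;> rfl

lemma gaussB_of_lt (p : ℂ) : ∀ n j, n < j → gaussB p n j = 0 := by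
  intro n
  induction n with
  | zero => intro j hj; match j, hj with | j+1, _ => rfl
  | succ n ih =>
    intro j hj
    match j, hj with
    | j+1, hj =>
      show gaussB p n (j+1) + p ^ (n-j) * gaussB p n j = 0
      rw [ih (j+1) (by omega), ih j (by omega)]; ring

lemma gaussB_diag (p : ℂ) : ∀ n, gaussB p n n = 1 := by
  intro n
  induction n with
  | zero => rfl
  | succ n ih =>
    show gaussB p n (n+1) + p ^ (n-n) * gaussB p n n = 1
    rw [gaussB_of_lt p n (n+1) (by omega), ih]; simp

lemma gaussB_mul (p : ℂ) : ∀ n j, j ≤ n →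
    qPoch p p (n-j) * qPoch p p j * gaussB p n j = qPoch p p n := by
  intro n
  induction n with
  | zero =>
    intro j hj
    interval_cases j
    simp [qPoch_zero, gaussB_zero_right]
  | succ n ih =>
    intro j hj
    match j with
    | 0 => simp [qPoch_zero, gaussB_zero_right]
    | j+1 =>
      by_cases hjn : j = n
      · subst hjn
        simp only [Nat.sub_self, qPoch_zero, gaussB_diag]
        ring
      · have hj1 : j + 1 ≤ n := by omega
        obtain ⟨k, hk⟩ : ∃ k, n = j + 1 + k := ⟨n - (j+1), by omega⟩
        have h1 := ih (j+1) hj1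
        have h2 := ih j (by omega)
        subst hk
        have e1 : j + 1 + k - (j + 1) = k := by omega
        have e2 : j + 1 + k - j = k + 1 := by omega
        have e3 : j + 1 + k + 1 - (j + 1) = k + 1 := by omega
        rw [e1] at h1
        rw [e2, qPoch_succ] at h2
        show qPoch p p (j+1+k+1-(j+1)) * qPoch p p (j+1) *
            (gaussB p (j+1+k) (j+1) + p ^ (j+1+k-j) * gaussB p (j+1+k) j)
          = qPoch p p (j+1+k+1)
        rw [e3, e2, qPoch_succ p p k, qPoch_succ p p (j+1+k), qPoch_succ p p j]
        rw [qPoch_succ p p j] at h1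
        linear_combination (1 - p * p^k) * h1 + ((1 - p * p^j) * p^(k+1)) * h2

lemma choose_two_succ (j : ℕ) : (j+1).choose 2 = j.choose 2 + j := by
  rw [Nat.choose_succ_succ]
  simp [Nat.choose_one_right, Nat.add_comm]

lemma V_succ (p : ℂ) (n : ℕ) :
    ∑ j ∈ range (n+2), (-1:ℂ)^j * p^(j.choose 2) * gaussB p (n+1) j
      = (1 - p^n) * ∑ j ∈ range (n+1), (-1:ℂ)^j * p^(j.choose 2) * gaussB p n j := by
  rw [Finset.sum_range_succ']
  have step : ∀ j ∈ range (n+1),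
      (-1:ℂ)^(j+1) * p^((j+1).choose 2) * gaussB p (n+1) (j+1)
        = (-1:ℂ)^(j+1) * p^((j+1).choose 2) * gaussB p n (j+1)
          + (-p^n) * ((-1:ℂ)^j * p^(j.choose 2) * gaussB p n j) := by
    intro j hj
    have hjn : j ≤ n := by have := mem_range.mp hj; omega
    have hg : gaussB p (n+1) (j+1) = gaussB p n (j+1) + p^(n-j) * gaussB p n j := rfl
    have hexp : p^((j+1).choose 2) * p^(n-j) = p^(j.choose 2) * p^n := by
      rw [← pow_add, ← pow_add, choose_two_succ]; congr 1; omega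
    rw [hg]
    linear_combination ((-1:ℂ)^(j+1) * gaussB p n j) * hexp
  rw [Finset.sum_congr rfl step, Finset.sum_add_distrib, ← Finset.mul_sum]
  have h2 : ∑ j ∈ range (n+1), (-1:ℂ)^(j+1) * p^((j+1).choose 2) * gaussB p n (j+1)
      + (-1:ℂ)^0 * p^((0:ℕ).choose 2) * gaussB p n 0
      = ∑ j ∈ range (n+2), (-1:ℂ)^j * p^(j.choose 2) * gaussB p n j := by
    exact (Finset.sum_range_succ' (fun j => (-1:ℂ)^j * p^(j.choose 2) * gaussB p n j) (n+1)).symm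
  have h3 : ∑ j ∈ range (n+2), (-1:ℂ)^j * p^(j.choose 2) * gaussB p n j
      = ∑ j ∈ range (n+1), (-1:ℂ)^j * p^(j.choose 2) * gaussB p n j := by
    rw [Finset.sum_range_succ, gaussB_of_lt p n (n+1) (by omega)]
    ring
  have h4 : ((-1:ℂ)^0 * p^((0:ℕ).choose 2) * gaussB p n 0 : ℂ)
      = (-1:ℂ)^0 * p^((0:ℕ).choose 2) * gaussB p (n+1) 0 := by
    rw [gaussB_zero_right, gaussB_zero_right]
  rw [h3] at h2
  rw [← h4] at *
  linear_combination h2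

lemma V_eq (p : ℂ) : ∀ n, ∑ j ∈ range (n+1), (-1:ℂ)^j * p^(j.choose 2) * gaussB p n j
    = ∏ i ∈ range n, (1 - p^i) := by
  intro n
  induction n with
  | zero => simp [gaussB_zero_right]
  | succ n ih =>
    rw [V_succ, ih, Finset.prod_range_succ]
    ring

lemma V_zero (p : ℂ) (n : ℕ) :
    ∑ j ∈ range (n+2), (-1:ℂ)^j * p^(j.choose 2) * gaussB p (n+1) j = 0 := by
  rw [V_eq]
  apply Finset.prod_eq_zero (Finset.mem_range.mpr (show 0 < n+1 by omega))
  simp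

lemma Z_zero {p : ℂ} (hp : ‖p‖ < 1) (n : ℕ) :
    ∑ j ∈ range (n+2), (-1:ℂ)^j * p^(j.choose 2) /
        (qPoch p p ((n+1)-j) * qPoch p p j) = 0 := by
  have hq1 : ‖p‖ ≤ 1 := hp.le
  have hP : qPoch p p (n+1) ≠ 0 := qPoch_ne_zero hp hq1 _
  have key : ∀ j ∈ range (n+2), (-1:ℂ)^j * p^(j.choose 2) /
        (qPoch p p ((n+1)-j) * qPoch p p j)
      = ((-1:ℂ)^j * p^(j.choose 2) * gaussB p (n+1) j) / qPoch p p (n+1) := by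
    intro j hj
    have hjn : j ≤ n + 1 := by have := mem_range.mp hj; omega
    have hmul := gaussB_mul p (n+1) j hjn
    have hu : qPoch p p ((n+1)-j) ≠ 0 := qPoch_ne_zero hp hq1 _
    have hb : qPoch p p j ≠ 0 := qPoch_ne_zero hp hq1 _
    rw [div_eq_div_iff (by exact mul_ne_zero hu hb) hP]
    linear_combination (-((-1:ℂ)^j * p^(j.choose 2))) * hmul
  rw [Finset.sum_congr rfl key, ← Finset.sum_div, V_zero]
  simp

lemma two_choose_two (j : ℕ) : 2 * j.choose 2 + 2 * j = j^2 + j := by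
  induction j with
  | zero => simp
  | succ j ih =>
    have hc : (j+1).choose 2 = j.choose 2 + j := choose_two_succ j
    have hs : (j+1)^2 = j^2 + 2*j + 1 := by ring
    omega

lemma q_exp (q : ℂ) (j : ℕ) : (q^2)^(j.choose 2) * q^(2*j) = q^(j^2+j) := by
  rw [← pow_mul, ← pow_add, ← two_choose_two j]

lemma S_eq {q : ℂ} (h1 : ‖q‖ < 1) : ∀ n : ℕ,
    ∑ j ∈ range (n+1), (-1:ℂ)^j * q^(j^2+j) /
        (qPoch (q^2) (q^2) (n-j) * qPoch (q^2) (q^2) j * (1 - q^(2*j+1)))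
      = qPoch (q^2) (q^2) n / qPoch q q (2*n+1) := by
  have hq0 : ‖q‖ ≤ 1 := h1.le
  have hp : ‖q^2‖ < 1 := by
    rw [norm_pow]; exact pow_lt_one₀ (norm_nonneg q) h1 (by norm_num)
  have hp1 : ‖q^2‖ ≤ 1 := hp.le
  intro n
  induction n with
  | zero =>
    simp [qPoch_succ, qPoch_zero]
  | succ n ih =>
    have hw : (1:ℂ) - q^(2*n+3) ≠ 0 := one_sub_pow_ne_zero h1 (by omega)
    have hrec : ∀ j ∈ range (n+1),
        (1 - q^(2*n+3)) * ((-1:ℂ)^j * q^(j^2+j) /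
            (qPoch (q^2) (q^2) (n+1-j) * qPoch (q^2) (q^2) j * (1 - q^(2*j+1))))
          = (-1:ℂ)^j * q^(j^2+j) /
            (qPoch (q^2) (q^2) (n-j) * qPoch (q^2) (q^2) j * (1 - q^(2*j+1)))
            + q^(2*n+2) * ((-1:ℂ)^j * (q^2)^(j.choose 2) /
                (qPoch (q^2) (q^2) (n+1-j) * qPoch (q^2) (q^2) j)) := by
      intro j hj
      have hjn : j ≤ n := by have := mem_range.mp hj; omega
      obtain ⟨k, hk⟩ : ∃ k, n = j + k := ⟨n - j, by omega⟩
      subst hk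
      have e1 : j + k - j = k := by omega
      have e2 : j + k + 1 - j = k + 1 := by omega
      rw [e1, e2, qPoch_succ]
      have hu : qPoch (q^2) (q^2) k ≠ 0 := qPoch_ne_zero hp hp1 _
      have hb : qPoch (q^2) (q^2) j ≠ 0 := qPoch_ne_zero hp hp1 _
      have hwj : (1:ℂ) - q^(2*j+1) ≠ 0 := one_sub_pow_ne_zero h1 (by omega)
      have hv : (1:ℂ) - q^2 * (q^2)^k ≠ 0 := by
        rw [show (q:ℂ)^2 * (q^2)^k = q^(2*k+2) by ring]
        exact one_sub_pow_ne_zero h1 (by omega)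
      rw [← q_exp q j]
      field_simp
      ring
    have hlast :
        (1 - q^(2*n+3)) * ((-1:ℂ)^(n+1) * q^((n+1)^2+(n+1)) /
            (qPoch (q^2) (q^2) (n+1-(n+1)) * qPoch (q^2) (q^2) (n+1) * (1 - q^(2*(n+1)+1))))
          = q^(2*n+2) * ((-1:ℂ)^(n+1) * (q^2)^((n+1).choose 2) /
              (qPoch (q^2) (q^2) (n+1-(n+1)) * qPoch (q^2) (q^2) (n+1))) := by
      rw [Nat.sub_self, qPoch_zero, ← q_exp q (n+1)]
      have hb : qPoch (q^2) (q^2) (n+1) ≠ 0 := qPoch_ne_zero hp hp1 _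
      have hw2 : (1:ℂ) - q^(2*(n+1)+1) ≠ 0 := one_sub_pow_ne_zero h1 (by omega)
      field_simp
      ring
    have hkey : (1 - q^(2*n+3)) * (∑ j ∈ range (n+2), (-1:ℂ)^j * q^(j^2+j) /
          (qPoch (q^2) (q^2) (n+1-j) * qPoch (q^2) (q^2) j * (1 - q^(2*j+1))))
        = qPoch (q^2) (q^2) n / qPoch q q (2*n+1) := by
      rw [Finset.mul_sum, Finset.sum_range_succ, hlast,
        Finset.sum_congr rfl hrec, Finset.sum_add_distrib, ← Finset.mul_sum, ih]
      have hZ : (∑ j ∈ range (n+1), (-1:ℂ)^j * (q^2)^(j.choose 2) /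
            (qPoch (q^2) (q^2) (n+1-j) * qPoch (q^2) (q^2) j))
          + (-1:ℂ)^(n+1) * (q^2)^((n+1).choose 2) /
            (qPoch (q^2) (q^2) (n+1-(n+1)) * qPoch (q^2) (q^2) (n+1)) = 0 := by
        rw [← Finset.sum_range_succ (fun j => (-1:ℂ)^j * (q^2)^(j.choose 2) /
            (qPoch (q^2) (q^2) (n+1-j) * qPoch (q^2) (q^2) j)) (n+1)]
        exact Z_zero hp n
      linear_combination q^(2*n+2) * hZ
    have hQ : qPoch q q (2*n+1) ≠ 0 := qPoch_ne_zero h1 hq0 _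
    have e3 : 2*(n+1)+1 = (2*n+1) + 1 + 1 := by omega
    rw [e3, qPoch_succ q q (2*n+1+1), qPoch_succ q q (2*n+1), qPoch_succ (q^2) (q^2) n]
    have hs : ∑ j ∈ range (n+2), (-1:ℂ)^j * q^(j^2+j) /
          (qPoch (q^2) (q^2) (n+1-j) * qPoch (q^2) (q^2) j * (1 - q^(2*j+1)))
        = qPoch (q^2) (q^2) n / qPoch q q (2*n+1) / (1 - q^(2*n+3)) :=
      eq_div_of_mul_eq hw (by linear_combination hkey)
    rw [hs, div_div]
    have h2 : (1:ℂ) - q*q^(2*n+1) ≠ 0 := by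
      rw [show (q:ℂ)*q^(2*n+1) = q^(2*n+2) by ring]; exact one_sub_pow_ne_zero h1 (by omega)
    have h3 : (1:ℂ) - q*q^(2*n+1+1) ≠ 0 := by
      rw [show (q:ℂ)*q^(2*n+1+1) = q^(2*n+3) by ring]; exact one_sub_pow_ne_zero h1 (by omega)
    rw [div_eq_div_iff (mul_ne_zero hQ hw) (mul_ne_zero (mul_ne_zero hQ h2) h3)]
    ring

/-- Identity (2.14). -/
theorem double_sum_mock_F2 (q : ℂ) (h0 : 0 < ‖q‖) (h1 : ‖q‖ < 1) :
    ∑' n : ℕ, ∑ j ∈ Finset.range (n + 1),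
        (-1 : ℂ) ^ j * q ^ (2 * n ^ 2 + 2 * n + j ^ 2 + j) /
          (qPoch (-q) q (2 * n + 1) * qPoch (q ^ 2) (q ^ 2) (n - j) *
            qPoch (q ^ 2) (q ^ 2) j * (1 - q ^ (2 * j + 1))) =
      mockF2 (q ^ 2) := by
  have hq0 : ‖q‖ ≤ 1 := h1.le
  have hp : ‖q^2‖ < 1 := by
    rw [norm_pow]; exact pow_lt_one₀ (norm_nonneg q) h1 (by norm_num)
  have hp1 : ‖q^2‖ ≤ 1 := hp.le
  rw [mockF2]
  apply tsum_congr
  intro n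
  have hN : qPoch (-q) q (2*n+1) ≠ 0 := qPoch_ne_zero (by simpa using h1) hq0 _
  have hQ : qPoch q q (2*n+1) ≠ 0 := qPoch_ne_zero h1 hq0 _
  have hPn : qPoch (q^2) (q^2) n ≠ 0 := qPoch_ne_zero hp hp1 _
  have hT : qPoch ((q^2)^(n+1)) (q^2) (n+1) ≠ 0 := by
    apply qPoch_ne_zero _ hp1
    rw [norm_pow]
    exact pow_lt_one₀ (norm_nonneg _) hp (by omega)
  have hfac : ∀ j ∈ range (n+1),
      (-1 : ℂ) ^ j * q ^ (2 * n ^ 2 + 2 * n + j ^ 2 + j) /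
          (qPoch (-q) q (2 * n + 1) * qPoch (q ^ 2) (q ^ 2) (n - j) *
            qPoch (q ^ 2) (q ^ 2) j * (1 - q ^ (2 * j + 1)))
        = (q^(2*n^2+2*n) / qPoch (-q) q (2*n+1)) *
            ((-1:ℂ)^j * q^(j^2+j) /
              (qPoch (q^2) (q^2) (n-j) * qPoch (q^2) (q^2) j * (1 - q^(2*j+1)))) := by
    intro j hj
    have hu : qPoch (q^2) (q^2) (n-j) ≠ 0 := qPoch_ne_zero hp hp1 _
    have hb : qPoch (q^2) (q^2) j ≠ 0 := qPoch_ne_zero hp hp1 _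
    have hwj : (1:ℂ) - q^(2*j+1) ≠ 0 := one_sub_pow_ne_zero h1 (by omega)
    rw [show 2*n^2+2*n+j^2+j = (2*n^2+2*n)+(j^2+j) by ring, pow_add]
    field_simp
  rw [Finset.sum_congr rfl hfac, ← Finset.mul_sum, S_eq h1 n]
  have hpair := qPoch_pair q (2*n+1)
  have hsplit : qPoch (q^2) (q^2) n * qPoch ((q^2)^(n+1)) (q^2) (n+1)
      = qPoch (q^2) (q^2) (2*n+1) := by
    rw [qPoch_split (q^2) n (n+1)]
    congr 1
    omega
  have hx : ((q:ℂ)^2)^(n^2+n) = q^(2*n^2+2*n) := by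
    rw [← pow_mul]
    congr 1
    ring
  rw [hx, div_mul_div_comm, div_eq_div_iff (mul_ne_zero hN hQ) hT]
  linear_combination q^(2*n^2+2*n) * hsplit - q^(2*n^2+2*n) * hpair
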